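/- For every real number b ≥ 0, every real number a > 0, and every complex number s with Re(s) > 0, one has ∫₀¹ cos(b·log t) · t^{s/2 − 1} · (a·t + (1−t)²/2)^{−s/2} dt = ∫₀^∞ cos(b·u) · (a − 1 + cosh(u))^{−s/2} du. -/

import Mathlib

open MeasureTheory Complex

/-- Alternative integral representation of the Picard-type function `𝓕_{b,a}(s)`:
for `b ≥ 0`, `a > 0` and `Re s > 0`,
`∫₀¹ cos(b log t) t^{s/2-1} (at + (1-t)²/2)^{-s/2} dt
  = ∫₀^∞ cos(bu) (a-1+cosh u)^{-s/2} du`. -/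
theorem picard_F_integral_repr (b : ℝ) (hb : 0 ≤ b) (a : ℝ) (ha : 0 < a)
    (s : ℂ) (hs : 0 < s.re) :
    ∫ t in Set.Ioo (0:ℝ) 1,
      (Real.cos (b * Real.log t) : ℂ) * (t : ℂ) ^ (s / 2 - 1) *
        ((a * t + (1 - t) ^ 2 / 2 : ℝ) : ℂ) ^ (-(s / 2)) =
      ∫ u in Set.Ioi (0:ℝ),
        (Real.cos (b * u) : ℂ) * ((a - 1 + Real.cosh u : ℝ) : ℂ) ^ (-(s / 2)) := by
  have himg : (fun u : ℝ => Real.exp (-u)) '' Set.Ioi 0 = Set.Ioo 0 1 := by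
    ext x
    constructor
    · rintro ⟨u, hu, rfl⟩
      exact ⟨Real.exp_pos _, Real.exp_lt_one_iff.mpr (by linarith [Set.mem_Ioi.mp hu])⟩
    · rintro ⟨hx0, hx1⟩
      exact ⟨-Real.log x, by simpa using Real.log_neg hx0 hx1, by simp [Real.exp_log hx0]⟩
  have hderiv : ∀ u ∈ Set.Ioi (0:ℝ),
      HasDerivWithinAt (fun u : ℝ => Real.exp (-u)) (-Real.exp (-u)) (Set.Ioi 0) u := by
    intro u _
    simpa [Function.comp_def] using ((Real.hasDerivAt_exp (-u)).comp u ((hasDerivAt_id u).neg)).hasDerivWithinAt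
  have hinj : Set.InjOn (fun u : ℝ => Real.exp (-u)) (Set.Ioi 0) := by
    intro x _ y _ h
    have := Real.exp_injective h
    linarith [this]
  have key := integral_image_eq_integral_abs_deriv_smul (f := fun u : ℝ => Real.exp (-u))
    measurableSet_Ioi hderiv hinj
    (fun t => (Real.cos (b * Real.log t) : ℂ) * (t : ℂ) ^ (s / 2 - 1) *
        ((a * t + (1 - t) ^ 2 / 2 : ℝ) : ℂ) ^ (-(s / 2)))
  rw [← himg, key]
  apply setIntegral_congr_fun measurableSet_Ioi
  intro u hu
  have hu0 : (0:ℝ) < u := hu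
  have he : (0:ℝ) < Real.exp (-u) := Real.exp_pos _
  have hch : (0:ℝ) < a - 1 + Real.cosh u := by
    have := Real.one_le_cosh u
    linarith
  have harg : a * Real.exp (-u) + (1 - Real.exp (-u)) ^ 2 / 2
      = Real.exp (-u) * (a - 1 + Real.cosh u) := by
    rw [Real.cosh_eq]
    have h1 : Real.exp (-u) * Real.exp u = 1 := by
      rw [← Real.exp_add]; simp
    nlinarith [Real.exp_neg u]
  simp only [harg, Real.log_exp, abs_neg, abs_of_pos he]
  rw [Complex.ofReal_mul, Complex.mul_cpow_ofReal_nonneg he.le hch.le]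
  have hne : (Real.exp (-u) : ℂ) ≠ 0 := by
    exact_mod_cast he.ne'
  have hpow : (Real.exp (-u) : ℂ) * (Real.exp (-u) : ℂ) ^ (s / 2 - 1)
      * (Real.exp (-u) : ℂ) ^ (-(s / 2)) = 1 := by
    rw [Complex.cpow_neg, Complex.cpow_sub _ _ hne, Complex.cpow_one]
    field_simp
  have hcos : Real.cos (b * -u) = Real.cos (b * u) := by
    rw [mul_neg, Real.cos_neg]
  rw [real_smul]
  rw [hcos]
  calc (Real.exp (-u) : ℂ) * (Real.cos (b * u) * (Real.exp (-u) : ℂ) ^ (s / 2 - 1) *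
        ((Real.exp (-u) : ℂ) ^ (-(s / 2)) * ((a - 1 + Real.cosh u : ℝ) : ℂ) ^ (-(s / 2))))
      = (Real.cos (b * u) : ℂ) * ((a - 1 + Real.cosh u : ℝ) : ℂ) ^ (-(s / 2)) *
        ((Real.exp (-u) : ℂ) * (Real.exp (-u) : ℂ) ^ (s / 2 - 1)
          * (Real.exp (-u) : ℂ) ^ (-(s / 2))) := by ring
    _ = _ := by rw [hpow, mul_one]
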